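/- For a 3×3 real antisymmetric matrix X = ![![0,-c,b],![c,0,-a],![-b,a,0]] with λ = √(a²+b²+c²) ≠ 0, the matrix exponential satisfies exp(X) = I + (sin λ / λ) X + ((1 - cos λ)/λ²) X² (the Euler–Rodrigues formula). -/

import Mathlib

open Matrix NormedSpace
open scoped Nat

set_option maxHeartbeats 1000000 in
theorem euler_rodrigues (a b c : ℝ)
    (X : Matrix (Fin 3) (Fin 3) ℝ)
    (hX : X = !![0, -c, b; c, 0, -a; -b, a, 0])
    (lam : ℝ) (hlam : lam = Real.sqrt (a ^ 2 + b ^ 2 + c ^ 2)) (hne : lam ≠ 0) :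
    exp X = 1 + (Real.sin lam / lam) • X + ((1 - Real.cos lam) / lam ^ 2) • X ^ 2 := by
  have hlam2 : lam ^ 2 = a ^ 2 + b ^ 2 + c ^ 2 := by
    rw [hlam]; exact Real.sq_sqrt (by positivity)
  -- key algebraic identity
  have h3 : X ^ 3 = (-(lam ^ 2)) • X := by
    subst hX
    rw [hlam2]
    ext i j
    fin_cases i <;> fin_cases j <;>
      simp [pow_succ, Matrix.mul_apply, Fin.sum_univ_succ] <;> ring
  -- powers of X
  have hodd : ∀ k : ℕ, X ^ (2 * k + 1) = ((-1 : ℝ) ^ k * lam ^ (2 * k)) • X := by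
    intro k
    induction k with
    | zero => simp
    | succ n ih =>
      have hidx : 2 * (n + 1) + 1 = (2 * n + 1) + 2 := by ring
      rw [hidx, pow_add, ih, Matrix.smul_mul, show X * X ^ 2 = X ^ 3 from (pow_succ' X 2).symm,
        h3, smul_smul]
      congr 1
      ring
  have heven : ∀ k : ℕ, X ^ (2 * k + 2) = ((-1 : ℝ) ^ k * lam ^ (2 * k)) • X ^ 2 := by
    intro k
    rw [show 2 * k + 2 = (2 * k + 1) + 1 from rfl, pow_succ, hodd k, Matrix.smul_mul, ← sq]
  -- scalar series
  have hs : HasSum (fun n : ℕ => (-1 : ℝ) ^ n * lam ^ (2 * n) / (2 * n + 1)!)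
      (Real.sin lam / lam) := by
    have := (Real.hasSum_sin lam).div_const lam
    convert this using 2 with n
    on_goal 1 => rfl
    rw [pow_succ]
    field_simp
  have hc : HasSum (fun n : ℕ => (-1 : ℝ) ^ n * lam ^ (2 * n) / (2 * n + 2)!)
      ((1 - Real.cos lam) / lam ^ 2) := by
    have h0 := Real.hasSum_cos lam
    have h1 : HasSum (fun n : ℕ => (-1 : ℝ) ^ (n + 1) * lam ^ (2 * (n + 1)) / (2 * (n + 1))!)
        (Real.cos lam - 1) := by
      have := (hasSum_nat_add_iff' (f := fun n : ℕ =>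
        (-1 : ℝ) ^ n * lam ^ (2 * n) / (2 * n)!) 1).mpr h0
      simpa using this
    have h2 := h1.div_const (-(lam ^ 2))
    have e1 : (Real.cos lam - 1) / (-(lam ^ 2)) = (1 - Real.cos lam) / lam ^ 2 := by
      rw [div_neg, ← neg_div, neg_sub]
    have e2 : (fun n : ℕ => (-1 : ℝ) ^ (n + 1) * lam ^ (2 * (n + 1)) / (2 * (n + 1))! / (-(lam ^ 2)))
        = fun n : ℕ => (-1 : ℝ) ^ n * lam ^ (2 * n) / (2 * n + 2)! := by
      funext n
      have hidx : 2 * (n + 1) = 2 * n + 2 := by ring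
      rw [hidx]
      have hfac : ((2 * n + 2)! : ℝ) ≠ 0 := Nat.cast_ne_zero.mpr (Nat.factorial_ne_zero _)
      have hl2 : (lam ^ 2) ≠ 0 := pow_ne_zero _ hne
      field_simp
      ring
    rw [e1, e2] at h2
    exact h2
  -- matrix series
  have hXodd : HasSum (fun k : ℕ => ((2 * k + 1)! : ℝ)⁻¹ • X ^ (2 * k + 1))
      ((Real.sin lam / lam) • X) := by
    have := hs.smul_const X
    convert this using 2 with k
    rw [hodd k, smul_smul, div_eq_mul_inv]
    congr 1
    ring
  have hXeven : HasSum (fun k : ℕ => ((2 * k + 2)! : ℝ)⁻¹ • X ^ (2 * k + 2))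
      (((1 - Real.cos lam) / lam ^ 2) • X ^ 2) := by
    have := hc.smul_const (X ^ 2)
    convert this using 2 with k
    rw [heven k, smul_smul, div_eq_mul_inv]
    congr 1
    ring
  have hXeven' : HasSum (fun k : ℕ => ((2 * k)! : ℝ)⁻¹ • X ^ (2 * k))
      (1 + ((1 - Real.cos lam) / lam ^ 2) • X ^ 2) := by
    have heq : (fun k : ℕ => ((2 * (k + 1))! : ℝ)⁻¹ • X ^ (2 * (k + 1)))
        = fun k : ℕ => ((2 * k + 2)! : ℝ)⁻¹ • X ^ (2 * k + 2) := by
      funext k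
      have hidx : 2 * (k + 1) = 2 * k + 2 := by ring
      rw [hidx]
    have h := hXeven
    rw [← heq] at h
    have h2 := HasSum.zero_add (f := fun k : ℕ => ((2 * k)! : ℝ)⁻¹ • X ^ (2 * k)) h
    simpa using h2
  have hfull : HasSum (fun n : ℕ => ((n)! : ℝ)⁻¹ • X ^ n)
      (1 + (Real.sin lam / lam) • X + ((1 - Real.cos lam) / lam ^ 2) • X ^ 2) := by
    have := HasSum.even_add_odd (f := fun n : ℕ => ((n)! : ℝ)⁻¹ • X ^ n) hXeven' hXodd
    convert this using 1
    abel
  rw [exp_eq_tsum (𝕂 := ℝ)]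
  exact hfull.tsum_eq
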